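/- For γ ∈ (0,1), let V(γ) be the 3-dimensional Lebesgue measure of the set of (p_0,p_1,p_3) ∈ [0,1]^3 satisfying 2·max(|γ/2 + (1−γ)(p_0 − p_1)|, |γ/2 + (1−γ)(p_1 − p_3)|) < 1. Then V(γ) = 3/4 if and only if γ ≥ 1/3. -/

import Mathlib

open MeasureTheory Set ENNReal

private lemma vol_interval_lower (x : ℝ) (hx : x ∈ Icc (0:ℝ) 1) :
    volume (Icc (0:ℝ) 1 ∩ Iio (x + 1/2)) = ENNReal.ofReal (min 1 (x + 1/2)) := by
  obtain ⟨hx0, hx1⟩ := hx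
  rcases le_or_gt (x + 1/2) 1 with h | h
  · have : Icc (0:ℝ) 1 ∩ Iio (x + 1/2) = Ico 0 (x + 1/2) := by
      ext y
      constructor
      · rintro ⟨⟨h1, _⟩, h3⟩; exact ⟨h1, h3⟩
      · rintro ⟨h1, h2⟩; exact ⟨⟨h1, le_trans h2.le h⟩, h2⟩
    rw [this, Real.volume_Ico, min_eq_right h]
    norm_num
  · have : Icc (0:ℝ) 1 ∩ Iio (x + 1/2) = Icc 0 1 := by
      apply inter_eq_left.2
      intro y hy; exact lt_of_le_of_lt hy.2 h
    rw [this, Real.volume_Icc, min_eq_left h.le]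
    norm_num

private lemma vol_interval_upper (x : ℝ) (hx : x ∈ Icc (0:ℝ) 1) :
    volume (Icc (0:ℝ) 1 ∩ Ioi (x - 1/2)) = ENNReal.ofReal (min 1 (3/2 - x)) := by
  obtain ⟨hx0, hx1⟩ := hx
  rcases lt_or_ge (x - 1/2) 0 with h | h
  · have : Icc (0:ℝ) 1 ∩ Ioi (x - 1/2) = Icc 0 1 := by
      apply inter_eq_left.2
      intro y hy; exact lt_of_lt_of_le h hy.1
    rw [this, Real.volume_Icc, min_eq_left (by linarith)]
    norm_num
  · have : Icc (0:ℝ) 1 ∩ Ioi (x - 1/2) = Ioc (x - 1/2) 1 := by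
      ext y
      constructor
      · rintro ⟨⟨_, h2⟩, h3⟩; exact ⟨h3, h2⟩
      · rintro ⟨h1, h2⟩; exact ⟨⟨le_trans h h1.le, h2⟩, h1⟩
    rw [this, Real.volume_Ioc, min_eq_right (by linarith)]
    norm_num
    ring_nf

private lemma integral_g :
    ∫ x in Icc (0:ℝ) 1, min 1 (x + 1/2) * min 1 (3/2 - x) = 3/4 := by
  rw [MeasureTheory.integral_Icc_eq_integral_Ioc,
    ← intervalIntegral.integral_of_le (by norm_num : (0:ℝ) ≤ 1)]
  have hcont : Continuous fun x : ℝ => min 1 (x + 1/2) * min 1 (3/2 - x) :=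
    (continuous_const.min (continuous_id.add continuous_const)).mul
      (continuous_const.min (continuous_const.sub continuous_id))
  have hsplit := intervalIntegral.integral_add_adjacent_intervals
    (a := (0:ℝ)) (b := 1/2) (c := 1)
    (hcont.intervalIntegrable (μ := volume) _ _) (hcont.intervalIntegrable (μ := volume) _ _)
  rw [← hsplit]
  have h1 : ∫ x in (0:ℝ)..(1/2), min 1 (x + 1/2) * min 1 (3/2 - x)
      = ∫ x in (0:ℝ)..(1/2), (x + 1/2) := by
    apply intervalIntegral.integral_congr
    intro x hx
    simp only
    rw [uIcc_of_le (by norm_num : (0:ℝ) ≤ 1/2)] at hx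
    obtain ⟨h0, h2⟩ := hx
    show min 1 _ * min 1 _ = _
    rw [min_eq_right (by linarith), min_eq_left (by linarith), mul_one]
  have h2 : ∫ x in (1/2:ℝ)..1, min 1 (x + 1/2) * min 1 (3/2 - x)
      = ∫ x in (1/2:ℝ)..1, (3/2 - x) := by
    apply intervalIntegral.integral_congr
    intro x hx
    simp only
    rw [uIcc_of_le (by norm_num : (1/2:ℝ) ≤ 1)] at hx
    obtain ⟨h0, h2⟩ := hx
    show min 1 _ * min 1 _ = _
    rw [min_eq_left (by linarith), min_eq_right (by linarith), one_mul]
  rw [h1, h2]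
  have e1 : ∫ x in (0:ℝ)..(1/2), (x + 1/2) = 3/8 := by
    rw [intervalIntegral.integral_add (intervalIntegral.intervalIntegrable_id)
      intervalIntegrable_const, integral_id,
      intervalIntegral.integral_const]
    norm_num
  have e2 : ∫ x in (1/2:ℝ)..1, (3/2 - x) = 3/8 := by
    rw [intervalIntegral.integral_sub intervalIntegrable_const
      (intervalIntegral.intervalIntegrable_id), integral_id,
      intervalIntegral.integral_const]
    norm_num
  rw [e1, e2]; norm_num

private lemma vol_big :
    volume {p : Fin 3 → ℝ | (∀ i, p i ∈ Icc (0:ℝ) 1) ∧ p 0 - p 1 < 1/2 ∧ p 1 - p 2 < 1/2}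
      = 3/4 := by
  set e := MeasurableEquiv.piFinSuccAbove (fun _ : Fin 3 => ℝ) 1 with he
  set T : Set (ℝ × (Fin 2 → ℝ)) :=
    {q | q.1 ∈ Icc (0:ℝ) 1 ∧ q.2 0 ∈ Icc (0:ℝ) 1 ∩ Iio (q.1 + 1/2)
      ∧ q.2 1 ∈ Icc (0:ℝ) 1 ∩ Ioi (q.1 - 1/2)} with hT
  have hTm : MeasurableSet T := by
    apply MeasurableSet.inter
    · exact measurable_fst measurableSet_Icc
    apply MeasurableSet.inter
    · apply MeasurableSet.inter
      · exact (measurable_snd.eval (a := 0)) measurableSet_Icc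
      · exact measurableSet_lt (measurable_snd.eval (a := 0))
          (measurable_fst.add_const _)
    · apply MeasurableSet.inter
      · exact (measurable_snd.eval (a := 1)) measurableSet_Icc
      · exact measurableSet_lt (measurable_fst.sub_const _)
          (measurable_snd.eval (a := 1))
  have hpre : {p : Fin 3 → ℝ | (∀ i, p i ∈ Icc (0:ℝ) 1) ∧ p 0 - p 1 < 1/2 ∧ p 1 - p 2 < 1/2}
      = e ⁻¹' T := by
    ext p
    simp only [mem_setOf_eq, mem_preimage, hT]
    have e1 : (e p).1 = p 1 := rfl
    have e20 : (e p).2 0 = p 0 := rfl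
    have e21 : (e p).2 1 = p 2 := rfl
    rw [e1, e20, e21, mem_inter_iff, mem_inter_iff, mem_Iio, mem_Ioi]
    constructor
    · rintro ⟨hbox, hc1, hc2⟩
      exact ⟨hbox 1, ⟨hbox 0, by linarith⟩, ⟨hbox 2, by linarith⟩⟩
    · rintro ⟨hb1, ⟨hb0, hc1⟩, hb2, hc2⟩
      refine ⟨fun i => ?_, by linarith, by linarith⟩
      fin_cases i <;> assumption
  rw [hpre, (volume_preserving_piFinSuccAbove (fun _ : Fin 3 => ℝ) 1).measure_preimage
    hTm.nullMeasurableSet]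
  rw [Measure.volume_eq_prod, Measure.prod_apply hTm]
  have hslice : ∀ x : ℝ, volume (Prod.mk x ⁻¹' T)
      = (Icc (0:ℝ) 1).indicator
        (fun x => ENNReal.ofReal (min 1 (x+1/2)) * ENNReal.ofReal (min 1 (3/2 - x))) x := by
    intro x
    by_cases hx : x ∈ Icc (0:ℝ) 1
    · rw [indicator_of_mem hx]
      have hs : Prod.mk x ⁻¹' T
          = univ.pi ![Icc (0:ℝ) 1 ∩ Iio (x+1/2), Icc (0:ℝ) 1 ∩ Ioi (x-1/2)] := by
        ext v
        simp [hT, Fin.forall_fin_two, hx.1, hx.2]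
      rw [hs, volume_pi_pi, Fin.prod_univ_two]
      simp only [Matrix.cons_val_zero, Matrix.cons_val_one, Matrix.head_cons]
      rw [vol_interval_lower x hx, vol_interval_upper x hx]
    · rw [indicator_of_notMem hx]
      have hs : Prod.mk x ⁻¹' T = ∅ := by
        refine eq_empty_of_forall_notMem fun v hv => hx ?_
        rw [hT] at hv; exact hv.1
      simp [hs]
  rw [lintegral_congr hslice, lintegral_indicator measurableSet_Icc]
  have hmul : ∀ x ∈ Icc (0:ℝ) 1,
      ENNReal.ofReal (min 1 (x+1/2)) * ENNReal.ofReal (min 1 (3/2-x))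
        = ENNReal.ofReal (min 1 (x+1/2) * min 1 (3/2-x)) := by
    intro x hx
    exact (ENNReal.ofReal_mul (le_min (by norm_num) (by linarith [hx.1]))).symm
  rw [setLIntegral_congr_fun measurableSet_Icc hmul]
  have hcont : Continuous fun x : ℝ => min 1 (x + 1/2) * min 1 (3/2 - x) :=
    (continuous_const.min (continuous_id.add continuous_const)).mul
      (continuous_const.min (continuous_const.sub continuous_id))
  have hint : IntegrableOn (fun x : ℝ => min 1 (x + 1/2) * min 1 (3/2 - x)) (Icc 0 1) :=
    hcont.integrableOn_Icc
  have hnn : 0 ≤ᵐ[volume.restrict (Icc (0:ℝ) 1)]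
      fun x : ℝ => min 1 (x + 1/2) * min 1 (3/2 - x) := by
    filter_upwards [ae_restrict_mem measurableSet_Icc] with x hx
    exact mul_nonneg (le_min (by norm_num) (by linarith [hx.1]))
      (le_min (by norm_num) (by linarith [hx.2]))
  rw [← ofReal_integral_eq_lintegral_ofReal hint hnn, integral_g]
  rw [ENNReal.ofReal_div_of_pos (by norm_num)]
  norm_num

private lemma vol_hyperplane (i : Fin 3) : volume {p : Fin 3 → ℝ | p i = 0} = 0 := by
  have : {p : Fin 3 → ℝ | p i = 0} = univ.pi (fun j => if j = i then ({0}:Set ℝ) else univ) := by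
    ext p
    simp only [mem_setOf_eq, mem_pi, mem_univ, forall_true_left]
    constructor
    · intro h j
      by_cases hj : j = i <;> simp [hj, h]
    · intro h
      have := h i
      simpa using this
  rw [this, volume_pi_pi]
  exact Finset.prod_eq_zero (Finset.mem_univ i) (by simp)

/-- For `γ ∈ (0,1)`, the Lebesgue volume `V(γ)` of the set of `(p₀,p₁,p₃) ∈ [0,1]³` with
`2·max(|γ/2+(1-γ)(p₀-p₁)|, |γ/2+(1-γ)(p₁-p₃)|) < 1` equals `3/4` iff `γ ≥ 1/3`.
Here `p 0`, `p 1`, `p 2` play the roles of `p₀`, `p₁`, `p₃` respectively. -/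
theorem volume_eq_three_quarters_iff (γ : ℝ) (hγ : γ ∈ Set.Ioo (0 : ℝ) 1) :
    volume {p : Fin 3 → ℝ | (∀ i, p i ∈ Set.Icc (0 : ℝ) 1) ∧
        2 * max |γ / 2 + (1 - γ) * (p 0 - p 1)| |γ / 2 + (1 - γ) * (p 1 - p 2)| < 1} =
      3 / 4 ↔ 1 / 3 ≤ γ := by
  obtain ⟨hγ0, hγ1⟩ := hγ
  have h1γ : (0:ℝ) < 1 - γ := by linarith
  set S : Set (Fin 3 → ℝ) := {p : Fin 3 → ℝ | (∀ i, p i ∈ Set.Icc (0 : ℝ) 1) ∧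
      2 * max |γ / 2 + (1 - γ) * (p 0 - p 1)| |γ / 2 + (1 - γ) * (p 1 - p 2)| < 1} with hS
  set B : Set (Fin 3 → ℝ) :=
    {p : Fin 3 → ℝ | (∀ i, p i ∈ Icc (0:ℝ) 1) ∧ p 0 - p 1 < 1/2 ∧ p 1 - p 2 < 1/2} with hB
  -- S ⊆ B
  have hSub : S ⊆ B := by
    rintro p ⟨hbox, hlt⟩
    have h1 : |γ / 2 + (1 - γ) * (p 0 - p 1)| < 1/2 := by
      have := le_max_left |γ / 2 + (1 - γ) * (p 0 - p 1)| |γ / 2 + (1 - γ) * (p 1 - p 2)|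
      linarith
    have h2 : |γ / 2 + (1 - γ) * (p 1 - p 2)| < 1/2 := by
      have := le_max_right |γ / 2 + (1 - γ) * (p 0 - p 1)| |γ / 2 + (1 - γ) * (p 1 - p 2)|
      linarith
    have h1' := (abs_lt.1 h1).2
    have h2' := (abs_lt.1 h2).2
    refine ⟨hbox, ?_, ?_⟩ <;> nlinarith
  constructor
  · -- volume S = 3/4 → 1/3 ≤ γ
    intro hvol
    by_contra hcon
    push_neg at hcon
    set t : ℝ := (1 + γ) / (2 * (1 - γ)) with htdef
    have ht0 : 0 < t := by positivity
    have ht1 : t < 1 := by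
      rw [htdef, div_lt_one (by positivity)]
      linarith
    have htkey : (1 - γ) * t = (1 + γ) / 2 := by
      rw [htdef]; field_simp
    set U : Set (Fin 3 → ℝ) :=
      univ.pi ![Ioo 0 ((1 - t)/4), Ioo ((1 + t)/2) 1, Ioo (1/2 : ℝ) 1] with hU
    have hUopen : IsOpen U := by
      apply isOpen_set_pi finite_univ
      intro i _
      fin_cases i <;> exact isOpen_Ioo
    have hUne : U.Nonempty := by
      refine ⟨![((1 - t)/4)/2, ((1 + t)/2 + 1)/2, 3/4], ?_⟩
      intro i _
      fin_cases i <;> refine mem_Ioo.mpr ⟨by norm_num <;> linarith, by norm_num <;> linarith⟩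
    have hUmem : ∀ p ∈ U, p 0 ∈ Ioo 0 ((1 - t)/4) ∧ p 1 ∈ Ioo ((1 + t)/2) 1
        ∧ p 2 ∈ Ioo (1/2 : ℝ) 1 := by
      intro p hp
      exact ⟨hp 0 (mem_univ _), hp 1 (mem_univ _), hp 2 (mem_univ _)⟩
    have hUB : U ⊆ B := by
      intro p hp
      obtain ⟨⟨h00, h01⟩, ⟨h10, h11⟩, h20, h21⟩ := hUmem p hp
      refine ⟨fun i => ?_, by linarith, by linarith⟩
      fin_cases i
      · exact ⟨h00.le, show p 0 ≤ 1 by linarith⟩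
      · exact ⟨show (0:ℝ) ≤ p 1 by linarith, h11.le⟩
      · exact ⟨show (0:ℝ) ≤ p 2 by linarith, h21.le⟩
    have hUS : Disjoint U S := by
      rw [Set.disjoint_left]
      rintro p hp ⟨hbox, hlt⟩
      obtain ⟨⟨h00, h01⟩, ⟨h10, h11⟩, _, _⟩ := hUmem p hp
      have hd : p 0 - p 1 < -t := by nlinarith
      have hv1 : γ / 2 + (1 - γ) * (p 0 - p 1) < -(1/2) := by nlinarith
      have habs : (1:ℝ)/2 < |γ / 2 + (1 - γ) * (p 0 - p 1)| :=
        lt_of_lt_of_le (by linarith) (neg_le_abs _)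
      have := le_max_left |γ / 2 + (1 - γ) * (p 0 - p 1)| |γ / 2 + (1 - γ) * (p 1 - p 2)|
      linarith
    have hvU : 0 < volume U := hUopen.measure_pos volume hUne
    have hsum : volume S + volume U ≤ volume B := by
      rw [← measure_union hUS.symm hUopen.measurableSet]
      exact measure_mono (union_subset hSub hUB)
    rw [hvol, vol_big] at hsum
    have hlt34 : (3/4 : ℝ≥0∞) < 3/4 + volume U :=
      ENNReal.lt_add_right (ENNReal.div_lt_top (by norm_num) (by norm_num)).ne (ne_of_gt hvU)
    exact absurd (lt_of_lt_of_le hlt34 hsum) (lt_irrefl _)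
  · -- 1/3 ≤ γ → volume S = 3/4
    intro hγ3
    have hdiff : B \ S ⊆ {p : Fin 3 → ℝ | p 0 = 0} ∪ {p : Fin 3 → ℝ | p 1 = 0} := by
      rintro p ⟨⟨hbox, hc1, hc2⟩, hnS⟩
      have hnlt : ¬ (2 * max |γ / 2 + (1 - γ) * (p 0 - p 1)|
          |γ / 2 + (1 - γ) * (p 1 - p 2)| < 1) := fun h => hnS ⟨hbox, h⟩
      push_neg at hnlt
      have hmax : (1:ℝ)/2 ≤ max |γ / 2 + (1 - γ) * (p 0 - p 1)|
          |γ / 2 + (1 - γ) * (p 1 - p 2)| := by linarith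
      rcases le_max_iff.1 hmax with h | h
      · left
        have hv1 : γ / 2 + (1 - γ) * (p 0 - p 1) < 1/2 := by nlinarith
        have hle : γ / 2 + (1 - γ) * (p 0 - p 1) ≤ -(1/2) := by
          cases abs_cases (γ / 2 + (1 - γ) * (p 0 - p 1)) with
          | inl hc => linarith [hc.1]
          | inr hc => linarith [hc.1]
        have hd1 : p 0 - p 1 ≤ -1 := by nlinarith
        have := (hbox 0).1
        have := (hbox 1).2
        show p 0 = 0
        linarith
      · right
        have hv2 : γ / 2 + (1 - γ) * (p 1 - p 2) < 1/2 := by nlinarith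
        have hle : γ / 2 + (1 - γ) * (p 1 - p 2) ≤ -(1/2) := by
          cases abs_cases (γ / 2 + (1 - γ) * (p 1 - p 2)) with
          | inl hc => linarith [hc.1]
          | inr hc => linarith [hc.1]
        have hd1 : p 1 - p 2 ≤ -1 := by nlinarith
        have := (hbox 1).1
        have := (hbox 2).2
        show p 1 = 0
        linarith
    have hnull : volume (B \ S) = 0 :=
      measure_mono_null hdiff
        (measure_union_null (vol_hyperplane 0) (vol_hyperplane 1))
    have hBle : volume B ≤ volume S := by
      calc volume B ≤ volume (S ∪ (B \ S)) :=
            measure_mono (fun p hp => by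
              by_cases h : p ∈ S
              · exact Or.inl h
              · exact Or.inr ⟨hp, h⟩)
        _ ≤ volume S + volume (B \ S) := measure_union_le _ _
        _ = volume S := by rw [hnull, add_zero]
    have : volume S = volume B := le_antisymm (measure_mono hSub) hBle
    rw [this, hB, vol_big]
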